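/- Let N and M be finite types, H_S : Matrix N N ℂ, H_A : Matrix M M ℂ, and R₀ : Matrix N M ℂ. Define R : ℝ → Matrix N M ℂ by R t = Matrix.exp ℂ ((-(Complex.I) * t) • H_S) * R₀ * Matrix.exp ℂ ((-(Complex.I) * t) • H_Aᵀ). Then for every t : ℝ, HasDerivAt R (-(Complex.I) • (H_S * R t + R t * H_Aᵀ)) t; equivalently, the relational matrix satisfies the generalized evolution equation i · (dR/dt) = H_S R(t) + R(t) H_Aᵀ. (Paper's Eq. (41), with ℏ = 1.) -/

import Mathlib

open Matrix NormedSpace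

attribute [local instance] Matrix.linftyOpNormedAddCommGroup Matrix.linftyOpNormedSpace

attribute [local instance] Matrix.linftyOpNormedRing Matrix.linftyOpNormedAlgebra

private lemma isBoundedBilinearMap_matMul {l m n : Type*} [Fintype l] [Fintype m] [Fintype n] :
    IsBoundedBilinearMap ℝ (fun p : Matrix l m ℂ × Matrix m n ℂ => p.1 * p.2) where
  add_left := fun a b c => Matrix.add_mul a b c
  smul_left := fun c a b => Matrix.smul_mul c a b
  add_right := fun a b c => Matrix.mul_add a b c
  smul_right := fun c a b => Matrix.mul_smul a c b
  bound := ⟨1, one_pos, fun A B => by simpa using Matrix.linfty_opNorm_mul A B⟩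

private lemma HasDerivAt.matMul {l m n : Type*} [Fintype l] [Fintype m] [Fintype n]
    {f : ℝ → Matrix l m ℂ} {g : ℝ → Matrix m n ℂ} {f' : Matrix l m ℂ} {g' : Matrix m n ℂ}
    {t : ℝ} (hf : HasDerivAt f f' t) (hg : HasDerivAt g g' t) :
    HasDerivAt (fun s => f s * g s) (f' * g t + f t * g') t := by
  have hb := (isBoundedBilinearMap_matMul (l := l) (m := m) (n := n)).hasFDerivAt (f t, g t)
  have h := hb.comp t (hf.hasFDerivAt.prodMk hg.hasFDerivAt)
  have h2 := h.hasDerivAt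
  simp only [IsBoundedBilinearMap.deriv, Function.comp_def] at h2
  exact h2.congr_deriv (by change f t * ((1:ℝ) • g') + ((1:ℝ) • f') * g t = _; simp [add_comm])

private lemma hasDerivAt_expUnitary {n : Type*} [Fintype n] [DecidableEq n]
    (H : Matrix n n ℂ) (t : ℝ) :
    HasDerivAt (fun s : ℝ => exp ((-Complex.I * (s : ℂ)) • H))
      ((-Complex.I) • (H * exp ((-Complex.I * (t : ℂ)) • H))) t := by
  have h0 := hasDerivAt_exp_smul_const' ((-Complex.I) • H) ((t : ℂ))
  have h : HasDerivAt (fun s : ℝ => exp ((s : ℂ) • ((-Complex.I) • H)))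
      (((-Complex.I) • H) * exp ((t : ℂ) • ((-Complex.I) • H))) t := by
    have := HasDerivAt.scomp (𝕜 := ℝ) t h0 Complex.ofRealCLM.hasDerivAt
    simp only [Function.comp_def, Complex.ofRealCLM_apply, Complex.ofReal_one, one_smul] at this
    exact this
  have hfun : ∀ s : ℝ, ((s : ℂ) • ((-Complex.I) • H)) = ((-Complex.I * (s : ℂ)) • H) := by
    intro s; rw [smul_smul, mul_comm]
  simp only [hfun] at h
  simpa [smul_mul_assoc] using h

/-- Paper's Eq. (41) (`ℏ = 1`): `R t = exp(-i t H_S) R₀ exp(-i t H_Aᵀ)` satisfies the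
generalized evolution equation `i dR/dt = H_S R(t) + R(t) H_Aᵀ`, i.e.
`dR/dt = -i (H_S R(t) + R(t) H_Aᵀ)`. -/
theorem relational_matrix_evolution {N M : Type*} [Fintype N] [Fintype M]
    [DecidableEq N] [DecidableEq M]
    (HS : Matrix N N ℂ) (HA : Matrix M M ℂ) (R₀ : Matrix N M ℂ) (R : ℝ → Matrix N M ℂ)
    (hR : ∀ t : ℝ, R t =
      exp ((-Complex.I * (t : ℂ)) • HS) * R₀ * exp ((-Complex.I * (t : ℂ)) • HAᵀ)) :
    ∀ t : ℝ, HasDerivAt R ((-Complex.I) • (HS * R t + R t * HAᵀ)) t := by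
  intro t
  have hrw : R = fun s : ℝ =>
      exp ((-Complex.I * (s : ℂ)) • HS) * R₀ * exp ((-Complex.I * (s : ℂ)) • HAᵀ) :=
    funext hR
  subst hrw
  set U := exp ((-Complex.I * (t : ℂ)) • HS) with hU
  set V := exp ((-Complex.I * (t : ℂ)) • HAᵀ) with hV
  have h1 := hasDerivAt_expUnitary HS t
  have h2 := hasDerivAt_expUnitary HAᵀ t
  have hc : HasDerivAt (fun _ : ℝ => R₀) (0 : Matrix N M ℂ) t := hasDerivAt_const t R₀
  have hd := (h1.matMul hc).matMul h2
  have hcomm : HAᵀ * V = V * HAᵀ := by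
    have : Commute ((-Complex.I * (t : ℂ)) • HAᵀ) HAᵀ :=
      (Commute.refl HAᵀ).smul_left _
    exact ((this.exp_left).symm).eq
  convert hd using 1
  simp [Matrix.mul_zero, add_zero, smul_add, Matrix.smul_mul, Matrix.mul_smul,
    Matrix.mul_assoc, hcomm]
  congr 2
  rw [((((Commute.refl HAᵀ).smul_left (Complex.I * (t : ℂ))).neg_left).exp_left).eq]
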